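/- Fix p ≥ q ≥ 1 and a subset Q ⊆ [p+2..p+q]. Let 𝒞 = {A ⊆ [p+q] : |A| = p, A ∩ [p+2..p+q] = Q}, and partition 𝒞 into 𝒜 = {A ∈ 𝒞 : Σ(A) odd} and 𝒜' = {A ∈ 𝒞 : Σ(A) even}. Then the pair 𝒜, 𝒜' is balanced. -/

import Mathlib

open Finset
open scoped symmDiff

/-- The two-element set of endpoints of an arc `π = (i,j)`. -/
def arcSet (π : ℕ × ℕ) : Finset ℕ := {π.1, π.2}

/-- `M` is a feasible matching for the `p`-subset `A` of `[p+q] = {1,…,p+q}`: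
`q` pairwise disjoint nested arcs `(i,j)`, `i<j`, each containing exactly one element
of `A` and one of its complement, with no free element covered by an arc's interval. -/
def IsFeasibleMatching (p q : ℕ) (A : Finset ℕ) (M : Finset (ℕ × ℕ)) : Prop :=
  M.card = q ∧
  (∀ π ∈ M, 1 ≤ π.1 ∧ π.1 < π.2 ∧ π.2 ≤ p + q) ∧
  (∀ π ∈ M, ∀ π' ∈ M, π ≠ π' → Disjoint (arcSet π) (arcSet π')) ∧
  (∀ π ∈ M, (arcSet π ∩ A).card = 1 ∧
            (arcSet π ∩ (Finset.Icc 1 (p + q) \ A)).card = 1) ∧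
  (∀ π ∈ M, ∀ π' ∈ M,
      Disjoint (Finset.Icc π.1 π.2) (Finset.Icc π'.1 π'.2) ∨
      Finset.Icc π.1 π.2 ⊆ Finset.Icc π'.1 π'.2 ∨
      Finset.Icc π'.1 π'.2 ⊆ Finset.Icc π.1 π.2) ∧
  (∀ k ∈ Finset.Icc 1 (p + q), (∀ π ∈ M, k ∉ arcSet π) →
      ∀ π ∈ M, k ∉ Finset.Icc π.1 π.2)

open Classical in
/-- The number of members of the collection `𝒜` for which `M` is a feasible matching. -/
noncomputable def feasCount (p q : ℕ) (𝒜 : Finset (Finset ℕ)) (M : Finset (ℕ × ℕ)) : ℕ :=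
  (𝒜.filter (fun A => IsFeasibleMatching p q A M)).card

/-- Two collections of `p`-subsets of `[p+q]` are balanced if every matching is a
feasible matching for equally many members of each. -/
def BalancedPair (p q : ℕ) (𝒜 𝒜' : Finset (Finset ℕ)) : Prop :=
  ∀ M : Finset (ℕ × ℕ), feasCount p q 𝒜 M = feasCount p q 𝒜' M


lemma mem_arcSet {k : ℕ} {π : ℕ × ℕ} : k ∈ arcSet π ↔ k = π.1 ∨ k = π.2 := by
  simp [arcSet]

lemma arcSet_subset_Icc {π : ℕ × ℕ} (h : π.1 ≤ π.2) : arcSet π ⊆ Finset.Icc π.1 π.2 := by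
  intro k hk
  rcases mem_arcSet.1 hk with rfl | rfl <;> simp [h]

lemma key_lemma (p q : ℕ) :
    ∀ n (S : Finset (ℕ × ℕ)), S.card ≤ n → S.Nonempty →
    (∀ π ∈ S, π.1 < π.2 ∧ π.2 ≤ p + q) →
    (∀ π ∈ S, ∀ π' ∈ S, π ≠ π' → Disjoint (arcSet π) (arcSet π')) →
    (∀ π ∈ S, ∀ π' ∈ S,
      Disjoint (Finset.Icc π.1 π.2) (Finset.Icc π'.1 π'.2) ∨
      Finset.Icc π.1 π.2 ⊆ Finset.Icc π'.1 π'.2 ∨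
      Finset.Icc π'.1 π'.2 ⊆ Finset.Icc π.1 π.2) →
    (∀ k, ∀ π ∈ S, k ∈ Finset.Icc π.1 π.2 → ∃ π' ∈ S, k ∈ arcSet π') →
    (∀ π ∈ S, π.2 = π.1 + 1 → p + 1 ≤ π.1) →
    S.card + 1 ≤ ((S.biUnion arcSet) ∩ Finset.Icc (p+1) (p+q)).card := by
  intro n
  induction n with
  | zero =>
    intro S hc hne _ _ _ _ _
    exact absurd (Finset.card_pos.2 hne) (by omega)
  | succ n ih =>
    intro S hcard hne hval hdisj hnest hclosed hshort
    -- the minimal endpoint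
    have hEne : (S.biUnion arcSet).Nonempty := by
      obtain ⟨π, hπ⟩ := hne
      exact ⟨π.1, Finset.mem_biUnion.2 ⟨π, hπ, mem_arcSet.2 (Or.inl rfl)⟩⟩
    set a := (S.biUnion arcSet).min' hEne with ha
    have hamem := (S.biUnion arcSet).min'_mem hEne
    obtain ⟨π0, hπ0S, hπ0a⟩ := Finset.mem_biUnion.1 hamem
    have hmin : ∀ π ∈ S, a ≤ π.1 ∧ a ≤ π.2 := by
      intro π hπ
      constructor <;> exact Finset.min'_le _ _ (Finset.mem_biUnion.2 ⟨π, hπ, mem_arcSet.2 (by tauto)⟩)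
    have haπ0 : a = π0.1 := by
      rcases mem_arcSet.1 hπ0a with h | h
      · exact h
      · have := (hmin π0 hπ0S).1
        have := (hval π0 hπ0S).1
        omega
    have hac : π0.1 < π0.2 := (hval π0 hπ0S).1
    -- split
    set S1 := S.filter (fun π => Finset.Icc π.1 π.2 ⊆ Finset.Icc π0.1 π0.2) with hS1def
    set S2 := S.filter (fun π => ¬ Finset.Icc π.1 π.2 ⊆ Finset.Icc π0.1 π0.2) with hS2def
    have hπ0S1 : π0 ∈ S1 := Finset.mem_filter.2 ⟨hπ0S, subset_rfl⟩
    have hcards : S1.card + S2.card = S.card := Finset.card_filter_add_card_filter_not _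
    -- helper: an arc in S2 cannot contain π0's interval, nor be disjoint from a point in [a,c]
    have hS2not : ∀ π ∈ S2, Disjoint (Finset.Icc π.1 π.2) (Finset.Icc π0.1 π0.2) := by
      intro π hπ
      have hπS : π ∈ S := Finset.mem_filter.1 hπ |>.1
      have hπn : ¬ Finset.Icc π.1 π.2 ⊆ Finset.Icc π0.1 π0.2 := (Finset.mem_filter.1 hπ).2
      have hne' : π ≠ π0 := by rintro rfl; exact hπn subset_rfl
      rcases hnest π hπS π0 hπ0S with h | h | h
      · exact h
      · exact absurd h hπn
      · -- π0's interval inside π's: then π.1 ≤ a, so π.1 = a, contradiction with arcSet disjoint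
        exfalso
        have h1 : π.1 ≤ π0.1 := by
          have : π0.1 ∈ Finset.Icc π.1 π.2 := h (by simp [Finset.mem_Icc]; omega)
          exact (Finset.mem_Icc.1 this).1
        have h2 : a ≤ π.1 := (hmin π hπS).1
        have : π.1 = π0.1 := by omega
        have hd := hdisj π hπS π0 hπ0S hne'
        exact (Finset.disjoint_left.1 hd (mem_arcSet.2 (Or.inl rfl)))
          (mem_arcSet.2 (Or.inl this))
    by_cases hS2 : S2.Nonempty
    · -- two nonempty pieces
      have hS1card : S1.card ≤ n := by
        have := Finset.card_pos.2 hS2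
        omega
      have hS2card : S2.card ≤ n := by
        have : 0 < S1.card := Finset.card_pos.2 ⟨π0, hπ0S1⟩
        omega
      have hval1 : ∀ π ∈ S1, π.1 < π.2 ∧ π.2 ≤ p + q := fun π hπ => hval π (Finset.filter_subset _ _ hπ)
      have hval2 : ∀ π ∈ S2, π.1 < π.2 ∧ π.2 ≤ p + q := fun π hπ => hval π (Finset.filter_subset _ _ hπ)
      have hclosed1 : ∀ k, ∀ π ∈ S1, k ∈ Finset.Icc π.1 π.2 → ∃ π' ∈ S1, k ∈ arcSet π' := by
        intro k π hπ hk
        obtain ⟨π', hπ'S, hπ'k⟩ := hclosed k π (Finset.filter_subset _ _ hπ) hk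
        refine ⟨π', ?_, hπ'k⟩
        by_contra hnot
        have hπ'S2 : π' ∈ S2 :=
          Finset.mem_filter.2 ⟨hπ'S, fun hsub => hnot (Finset.mem_filter.2 ⟨hπ'S, hsub⟩)⟩
        have hd := hS2not π' hπ'S2
        have hk1 : k ∈ Finset.Icc π0.1 π0.2 := (Finset.mem_filter.1 hπ).2 hk
        have hk2 : k ∈ Finset.Icc π'.1 π'.2 :=
          arcSet_subset_Icc (le_of_lt (hval π' hπ'S).1) hπ'k
        exact (Finset.disjoint_left.1 hd hk2) hk1
      have hclosed2 : ∀ k, ∀ π ∈ S2, k ∈ Finset.Icc π.1 π.2 → ∃ π' ∈ S2, k ∈ arcSet π' := by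
        intro k π hπ hk
        obtain ⟨π', hπ'S, hπ'k⟩ := hclosed k π (Finset.filter_subset _ _ hπ) hk
        refine ⟨π', ?_, hπ'k⟩
        rw [hS2def, Finset.mem_filter]
        refine ⟨hπ'S, ?_⟩
        intro hsub
        have hd := hS2not π hπ
        have hk1 : k ∈ Finset.Icc π0.1 π0.2 := hsub (arcSet_subset_Icc (le_of_lt (hval π' hπ'S).1) hπ'k)
        exact (Finset.disjoint_left.1 hd hk) hk1
      have h1 := ih S1 hS1card ⟨π0, hπ0S1⟩ hval1
        (fun π hπ π' hπ' => hdisj π (Finset.filter_subset _ _ hπ) π' (Finset.filter_subset _ _ hπ'))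
        (fun π hπ π' hπ' => hnest π (Finset.filter_subset _ _ hπ) π' (Finset.filter_subset _ _ hπ'))
        hclosed1 (fun π hπ => hshort π (Finset.filter_subset _ _ hπ))
      have h2 := ih S2 hS2card hS2 hval2
        (fun π hπ π' hπ' => hdisj π (Finset.filter_subset _ _ hπ) π' (Finset.filter_subset _ _ hπ'))
        (fun π hπ π' hπ' => hnest π (Finset.filter_subset _ _ hπ) π' (Finset.filter_subset _ _ hπ'))
        hclosed2 (fun π hπ => hshort π (Finset.filter_subset _ _ hπ))
      -- combine
      have hdisjE : Disjoint (S1.biUnion arcSet ∩ Finset.Icc (p+1) (p+q))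
          (S2.biUnion arcSet ∩ Finset.Icc (p+1) (p+q)) := by
        rw [Finset.disjoint_left]
        intro k hk1 hk2
        obtain ⟨π1, hπ1, hkπ1⟩ := Finset.mem_biUnion.1 (Finset.mem_inter.1 hk1).1
        obtain ⟨π2, hπ2, hkπ2⟩ := Finset.mem_biUnion.1 (Finset.mem_inter.1 hk2).1
        have hne12 : π1 ≠ π2 := by
          rintro rfl
          exact (Finset.mem_filter.1 hπ2).2 (Finset.mem_filter.1 hπ1).2
        exact (Finset.disjoint_left.1 (hdisj π1 (Finset.filter_subset _ _ hπ1) π2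
          (Finset.filter_subset _ _ hπ2) hne12) hkπ1) hkπ2
      have hsub : (S1.biUnion arcSet ∩ Finset.Icc (p+1) (p+q)) ∪
          (S2.biUnion arcSet ∩ Finset.Icc (p+1) (p+q)) ⊆
          (S.biUnion arcSet ∩ Finset.Icc (p+1) (p+q)) := by
        intro k hk
        rcases Finset.mem_union.1 hk with hk | hk <;>
        · rw [Finset.mem_inter] at hk ⊢
          obtain ⟨π, hπ, hkπ⟩ := Finset.mem_biUnion.1 hk.1
          exact ⟨Finset.mem_biUnion.2 ⟨π, Finset.filter_subset _ _ hπ, hkπ⟩, hk.2⟩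
      calc S.card + 1 ≤ (S1.card + 1) + (S2.card + 1) := by omega
        _ ≤ _ + _ := Nat.add_le_add h1 h2
        _ = ((S1.biUnion arcSet ∩ Finset.Icc (p+1) (p+q)) ∪
            (S2.biUnion arcSet ∩ Finset.Icc (p+1) (p+q))).card :=
          (Finset.card_union_of_disjoint hdisjE).symm
        _ ≤ _ := Finset.card_le_card hsub
    · -- S2 empty: every arc inside [a, c]
      have hall : ∀ π ∈ S, Finset.Icc π.1 π.2 ⊆ Finset.Icc π0.1 π0.2 := by
        intro π hπ
        by_contra h
        exact hS2 ⟨π, Finset.mem_filter.2 ⟨hπ, h⟩⟩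
      have hstrict : ∀ π ∈ S.erase π0, π0.1 < π.1 ∧ π.2 < π0.2 := by
        intro π hπ
        have hπS : π ∈ S := Finset.mem_of_mem_erase hπ
        have hneq : π ≠ π0 := Finset.ne_of_mem_erase hπ
        have hd := hdisj π hπS π0 hπ0S hneq
        have h1 : π0.1 ≤ π.1 ∧ π.2 ≤ π0.2 := by
          have := hall π hπS
          have hm1 : π.1 ∈ Finset.Icc π0.1 π0.2 := this (by
            simp [Finset.mem_Icc]
            exact le_of_lt (hval π hπS).1)
          have hm2 : π.2 ∈ Finset.Icc π0.1 π0.2 := this (by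
            simp [Finset.mem_Icc]
            exact le_of_lt (hval π hπS).1)
          exact ⟨(Finset.mem_Icc.1 hm1).1, (Finset.mem_Icc.1 hm2).2⟩
        have hne1 : π.1 ≠ π0.1 := fun h =>
          (Finset.disjoint_left.1 hd (mem_arcSet.2 (Or.inl rfl))) (mem_arcSet.2 (Or.inl h))
        have hne2 : π.2 ≠ π0.2 := fun h =>
          (Finset.disjoint_left.1 hd (mem_arcSet.2 (Or.inr rfl))) (mem_arcSet.2 (Or.inr h))
        omega
      by_cases hS' : (S.erase π0).Nonempty
      · -- inductive case on the interior
        have hcard' : (S.erase π0).card ≤ n := by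
          have h1 := Finset.card_erase_of_mem hπ0S
          have h2 := Finset.card_pos.2 hne
          omega
        have hclosed' : ∀ k, ∀ π ∈ S.erase π0, k ∈ Finset.Icc π.1 π.2 →
            ∃ π' ∈ S.erase π0, k ∈ arcSet π' := by
          intro k π hπ hk
          obtain ⟨π', hπ'S, hπ'k⟩ := hclosed k π (Finset.mem_of_mem_erase hπ) hk
          refine ⟨π', Finset.mem_erase.2 ⟨?_, hπ'S⟩, hπ'k⟩
          rintro rfl
          have hs := hstrict π hπ
          rcases mem_arcSet.1 hπ'k with h | h <;>
            (rw [Finset.mem_Icc] at hk; omega)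
        have h1 := ih (S.erase π0) hcard' hS'
          (fun π hπ => hval π (Finset.mem_of_mem_erase hπ))
          (fun π hπ π' hπ' => hdisj π (Finset.mem_of_mem_erase hπ) π' (Finset.mem_of_mem_erase hπ'))
          (fun π hπ π' hπ' => hnest π (Finset.mem_of_mem_erase hπ) π' (Finset.mem_of_mem_erase hπ'))
          hclosed' (fun π hπ => hshort π (Finset.mem_of_mem_erase hπ))
        -- c = π0.2 is a new element of the intersection
        obtain ⟨x, hx⟩ := Finset.card_pos.1 (by omega :
          0 < ((S.erase π0).biUnion arcSet ∩ Finset.Icc (p+1) (p+q)).card)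
        have hxR := (Finset.mem_inter.1 hx).2
        obtain ⟨πx, hπx, hxπ⟩ := Finset.mem_biUnion.1 (Finset.mem_inter.1 hx).1
        have hxlt : x < π0.2 := by
          have := hstrict πx hπx
          have := (hval πx (Finset.mem_of_mem_erase hπx)).1
          rcases mem_arcSet.1 hxπ with h | h <;> omega
        have hcR : π0.2 ∈ Finset.Icc (p+1) (p+q) := by
          rw [Finset.mem_Icc] at hxR ⊢
          have := (hval π0 hπ0S).2
          omega
        have hcnot : π0.2 ∉ (S.erase π0).biUnion arcSet ∩ Finset.Icc (p+1) (p+q) := by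
          intro h
          obtain ⟨π', hπ', hπ'c⟩ := Finset.mem_biUnion.1 (Finset.mem_inter.1 h).1
          have hs := hstrict π' hπ'
          have := (hval π' (Finset.mem_of_mem_erase hπ')).1
          rcases mem_arcSet.1 hπ'c with h | h <;> omega
        have hsub : insert π0.2 ((S.erase π0).biUnion arcSet ∩ Finset.Icc (p+1) (p+q)) ⊆
            S.biUnion arcSet ∩ Finset.Icc (p+1) (p+q) := by
          intro k hk
          rcases Finset.mem_insert.1 hk with rfl | hk
          · exact Finset.mem_inter.2 ⟨Finset.mem_biUnion.2 ⟨π0, hπ0S, mem_arcSet.2 (Or.inr rfl)⟩, hcR⟩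
          · rw [Finset.mem_inter] at hk ⊢
            obtain ⟨π, hπ, hkπ⟩ := Finset.mem_biUnion.1 hk.1
            exact ⟨Finset.mem_biUnion.2 ⟨π, Finset.mem_of_mem_erase hπ, hkπ⟩, hk.2⟩
        calc S.card + 1 = ((S.erase π0).card + 1) + 1 := by
              have ha1 := Finset.card_erase_of_mem hπ0S
              have ha2 := Finset.card_pos.2 hne
              omega
          _ ≤ _ + 1 := by omega
          _ = (insert π0.2 ((S.erase π0).biUnion arcSet ∩ Finset.Icc (p+1) (p+q))).card :=
            (Finset.card_insert_of_notMem hcnot).symm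
          _ ≤ _ := Finset.card_le_card hsub
      · -- S = {π0}, which must be a short arc
        have hS1 : S = {π0} := by
          apply Finset.eq_singleton_iff_unique_mem.2
          refine ⟨hπ0S, fun π hπ => ?_⟩
          by_contra h
          exact hS' ⟨π, Finset.mem_erase.2 ⟨h, hπ⟩⟩
        have hshort0 : π0.2 = π0.1 + 1 := by
          by_contra h
          have hmem : π0.1 + 1 ∈ Finset.Icc π0.1 π0.2 := by
            rw [Finset.mem_Icc]; omega
          obtain ⟨π', hπ'S, hπ'⟩ := hclosed (π0.1 + 1) π0 hπ0S hmem
          rw [hS1, Finset.mem_singleton] at hπ'S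
          subst hπ'S
          rcases mem_arcSet.1 hπ' with h' | h' <;> omega
        have hp1 : p + 1 ≤ π0.1 := hshort π0 hπ0S hshort0
        have hsub : ({π0.1, π0.2} : Finset ℕ) ⊆ S.biUnion arcSet ∩ Finset.Icc (p+1) (p+q) := by
          intro k hk
          have hval0 := hval π0 hπ0S
          rw [Finset.mem_insert, Finset.mem_singleton] at hk
          refine Finset.mem_inter.2 ⟨Finset.mem_biUnion.2 ⟨π0, hπ0S, mem_arcSet.2 hk⟩, ?_⟩
          rw [Finset.mem_Icc]
          rcases hk with rfl | rfl <;> omega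
        have h2 : ({π0.1, π0.2} : Finset ℕ).card = 2 := by
          rw [Finset.card_insert_of_notMem (by simp; omega), Finset.card_singleton]
        calc S.card + 1 = 2 := by rw [hS1]; simp
          _ = _ := h2.symm
          _ ≤ _ := Finset.card_le_card hsub

lemma exists_short (p q : ℕ) (hq : 1 ≤ q) {A : Finset ℕ} {M : Finset (ℕ × ℕ)}
    (hF : IsFeasibleMatching p q A M) :
    ∃ π ∈ M, π.2 = π.1 + 1 ∧ π.1 ≤ p := by
  obtain ⟨hcard, hval, hdisj, -, hnest, hfree⟩ := hF
  by_contra hcon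
  push_neg at hcon
  have hshort : ∀ π ∈ M, π.2 = π.1 + 1 → p + 1 ≤ π.1 := by
    intro π hπ h
    have := hcon π hπ h
    omega
  have hclosed : ∀ k, ∀ π ∈ M, k ∈ Finset.Icc π.1 π.2 → ∃ π' ∈ M, k ∈ arcSet π' := by
    intro k π hπ hk
    by_contra h
    push_neg at h
    have hkIcc : k ∈ Finset.Icc 1 (p+q) := by
      rw [Finset.mem_Icc] at hk ⊢
      have := hval π hπ; omega
    exact hfree k hkIcc h π hπ hk
  have hkey := key_lemma p q M.card M le_rfl (Finset.card_pos.1 (by omega))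
    (fun π hπ => ⟨(hval π hπ).2.1, (hval π hπ).2.2⟩) hdisj hnest hclosed hshort
  have hle : ((M.biUnion arcSet) ∩ Finset.Icc (p+1) (p+q)).card ≤ q := by
    calc ((M.biUnion arcSet) ∩ Finset.Icc (p+1) (p+q)).card
        ≤ (Finset.Icc (p+1) (p+q)).card := Finset.card_le_card Finset.inter_subset_right
      _ = q := by rw [Nat.card_Icc]; omega
  omega

lemma insert_erase_facts {A : Finset ℕ} {x y : ℕ} (hx : x ∈ A) (hy : y ∉ A) :
    (insert y (A.erase x)).card = A.card ∧
    (∑ a ∈ insert y (A.erase x), a) + x = (∑ a ∈ A, a) + y := by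
  have hy' : y ∉ A.erase x := fun h => hy (Finset.mem_of_mem_erase h)
  constructor
  · rw [Finset.card_insert_of_notMem hy', Finset.card_erase_of_mem hx]
    have := Finset.card_pos.2 ⟨x, hx⟩
    omega
  · rw [Finset.sum_insert hy']
    have := Finset.sum_erase_add A id hx
    simp only [id] at this
    omega

lemma pair_counts {i N : ℕ} {B : Finset ℕ} (h1 : 1 ≤ i) (h2 : i + 1 ≤ N)
    (h : (i ∈ B ∧ i+1 ∉ B) ∨ (i ∉ B ∧ i+1 ∈ B)) :
    (({i, i+1} : Finset ℕ) ∩ B).card = 1 ∧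
    (({i, i+1} : Finset ℕ) ∩ (Finset.Icc 1 N \ B)).card = 1 := by
  rcases h with ⟨hi, hi1⟩ | ⟨hi, hi1⟩
  · have e1 : ({i, i+1} : Finset ℕ) ∩ B = {i} := by
      ext k
      simp only [Finset.mem_inter, Finset.mem_insert, Finset.mem_singleton]
      constructor
      · rintro ⟨rfl | rfl, hk⟩
        · rfl
        · exact absurd hk hi1
      · rintro rfl; exact ⟨Or.inl rfl, hi⟩
    have e2 : ({i, i+1} : Finset ℕ) ∩ (Finset.Icc 1 N \ B) = {i+1} := by
      ext k
      simp only [Finset.mem_inter, Finset.mem_insert, Finset.mem_singleton,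
        Finset.mem_sdiff, Finset.mem_Icc]
      constructor
      · rintro ⟨rfl | rfl, _, hk⟩
        · exact absurd hi hk
        · rfl
      · rintro rfl; exact ⟨Or.inr rfl, ⟨by omega, by omega⟩, hi1⟩
    rw [e1, e2]; simp
  · have e1 : ({i, i+1} : Finset ℕ) ∩ B = {i+1} := by
      ext k
      simp only [Finset.mem_inter, Finset.mem_insert, Finset.mem_singleton]
      constructor
      · rintro ⟨rfl | rfl, hk⟩
        · exact absurd hk hi
        · rfl
      · rintro rfl; exact ⟨Or.inr rfl, hi1⟩
    have e2 : ({i, i+1} : Finset ℕ) ∩ (Finset.Icc 1 N \ B) = {i} := by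
      ext k
      simp only [Finset.mem_inter, Finset.mem_insert, Finset.mem_singleton,
        Finset.mem_sdiff, Finset.mem_Icc]
      constructor
      · rintro ⟨rfl | rfl, _, hk⟩
        · rfl
        · exact absurd hi1 hk
      · rintro rfl; exact ⟨Or.inl rfl, ⟨by omega, by omega⟩, hi⟩
    rw [e1, e2]; simp

lemma swap_all (p q : ℕ) (hq : 1 ≤ q) {π0 : ℕ × ℕ} {M : Finset (ℕ × ℕ)}
    (hπ0M : π0 ∈ M) (hs : π0.2 = π0.1 + 1) (hip : π0.1 ≤ p)
    {A : Finset ℕ} (hA : A ⊆ Finset.Icc 1 (p + q))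
    (hF : IsFeasibleMatching p q A M) :
    (A ∆ arcSet π0) ⊆ Finset.Icc 1 (p + q) ∧
    (A ∆ arcSet π0).card = A.card ∧
    (A ∆ arcSet π0) ∩ Finset.Icc (p + 2) (p + q) = A ∩ Finset.Icc (p + 2) (p + q) ∧
    IsFeasibleMatching p q (A ∆ arcSet π0) M ∧
    (Odd (∑ a ∈ A ∆ arcSet π0, a) ↔ ¬ Odd (∑ a ∈ A, a)) := by
  obtain ⟨hcard, hval, hdisj, hone, hnest, hfree⟩ := hF
  set i := π0.1 with hidef
  have hi1 : 1 ≤ i := (hval π0 hπ0M).1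
  have harc : arcSet π0 = {i, i+1} := by rw [arcSet, hs]
  have hii : i + 1 ≤ p + q := by omega
  -- exactly one of i, i+1 lies in A
  have hxor : (i ∈ A ∧ i+1 ∉ A) ∨ (i ∉ A ∧ i+1 ∈ A) := by
    have h1 := (hone π0 hπ0M).1
    rw [harc] at h1
    by_cases hiA : i ∈ A <;> by_cases hi1A : i+1 ∈ A
    · exfalso
      have : 1 < (({i, i+1} : Finset ℕ) ∩ A).card := by
        apply Finset.one_lt_card.2
        exact ⟨i, Finset.mem_inter.2 ⟨by simp, hiA⟩, i+1,
          Finset.mem_inter.2 ⟨by simp, hi1A⟩, by omega⟩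
      omega
    · exact Or.inl ⟨hiA, hi1A⟩
    · exact Or.inr ⟨hiA, hi1A⟩
    · exfalso
      obtain ⟨x, hx⟩ := Finset.card_pos.1 (by omega : 0 < (({i, i+1} : Finset ℕ) ∩ A).card)
      rw [Finset.mem_inter, Finset.mem_insert, Finset.mem_singleton] at hx
      rcases hx.1 with rfl | rfl
      · exact hiA hx.2
      · exact hi1A hx.2
  -- membership transfer off the arc
  have hmem' : ∀ k, k ∉ arcSet π0 → (k ∈ A ∆ arcSet π0 ↔ k ∈ A) := by
    intro k hk
    rw [Finset.mem_symmDiff]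
    tauto
  have hmemi : (i ∈ A ∆ arcSet π0 ↔ i ∉ A) ∧ (i+1 ∈ A ∆ arcSet π0 ↔ i+1 ∉ A) := by
    constructor <;>
    · rw [Finset.mem_symmDiff, harc]
      simp only [Finset.mem_insert, Finset.mem_singleton]
      tauto
  -- explicit description
  have heq : A ∆ arcSet π0 =
      if i ∈ A then insert (i+1) (A.erase i) else insert i (A.erase (i+1)) := by
    rcases hxor with ⟨hiA, hi1A⟩ | ⟨hiA, hi1A⟩
    · rw [if_pos hiA]
      ext k
      rw [Finset.mem_symmDiff, harc]
      simp only [Finset.mem_insert, Finset.mem_singleton, Finset.mem_erase]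
      constructor
      · rintro (⟨hkA, hk⟩ | ⟨rfl | rfl, hk⟩)
        · exact Or.inr ⟨fun h => hk (Or.inl h), hkA⟩
        · exact absurd hiA hk
        · exact Or.inl rfl
      · rintro (rfl | ⟨hk, hkA⟩)
        · exact Or.inr ⟨Or.inr rfl, hi1A⟩
        · exact Or.inl ⟨hkA, fun h => by rcases h with rfl | rfl; exacts [hk rfl, hi1A hkA]⟩
    · rw [if_neg hiA]
      ext k
      rw [Finset.mem_symmDiff, harc]
      simp only [Finset.mem_insert, Finset.mem_singleton, Finset.mem_erase]
      constructor
      · rintro (⟨hkA, hk⟩ | ⟨rfl | rfl, hk⟩)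
        · exact Or.inr ⟨fun h => hk (Or.inr h), hkA⟩
        · exact Or.inl rfl
        · exact absurd hi1A hk
      · rintro (rfl | ⟨hk, hkA⟩)
        · exact Or.inr ⟨Or.inl rfl, hiA⟩
        · exact Or.inl ⟨hkA, fun h => by rcases h with rfl | rfl; exacts [hiA hkA, hk rfl]⟩
  refine ⟨?_, ?_, ?_, ?_, ?_⟩
  · -- subset
    intro k hk
    rw [Finset.mem_symmDiff] at hk
    rcases hk with ⟨hk, _⟩ | ⟨hk, _⟩
    · exact hA hk
    · rw [harc, Finset.mem_insert, Finset.mem_singleton] at hk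
      rw [Finset.mem_Icc]
      rcases hk with rfl | rfl <;> omega
  · -- card
    rw [heq]
    rcases hxor with ⟨hiA, hi1A⟩ | ⟨hiA, hi1A⟩
    · rw [if_pos hiA]; exact (insert_erase_facts hiA hi1A).1
    · rw [if_neg hiA]; exact (insert_erase_facts hi1A hiA).1
  · -- Q-part
    ext k
    rw [Finset.mem_inter, Finset.mem_inter]
    constructor <;> intro ⟨hk1, hk2⟩ <;> refine ⟨?_, hk2⟩
    · rw [hmem' k (by
        rw [harc, Finset.mem_insert, Finset.mem_singleton]
        rw [Finset.mem_Icc] at hk2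
        omega)] at hk1
      exact hk1
    · rw [hmem' k (by
        rw [harc, Finset.mem_insert, Finset.mem_singleton]
        rw [Finset.mem_Icc] at hk2
        omega)]
      exact hk1
  · -- feasibility
    refine ⟨hcard, hval, hdisj, ?_, hnest, hfree⟩
    intro π hπ
    by_cases hππ0 : π = π0
    · rw [hππ0]
      have hxor' : (i ∈ A ∆ arcSet π0 ∧ i+1 ∉ A ∆ arcSet π0) ∨
          (i ∉ A ∆ arcSet π0 ∧ i+1 ∈ A ∆ arcSet π0) := by
        rcases hxor with ⟨hiA, hi1A⟩ | ⟨hiA, hi1A⟩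
        · exact Or.inr ⟨fun h => (hmemi.1.1 h) hiA, hmemi.2.2 hi1A⟩
        · exact Or.inl ⟨hmemi.1.2 hiA, fun h => (hmemi.2.1 h) hi1A⟩
      rw [harc] at hxor' ⊢
      exact pair_counts hi1 hii hxor'
    · have hd := hdisj π hπ π0 hπ0M hππ0
      have e1 : arcSet π ∩ (A ∆ arcSet π0) = arcSet π ∩ A := by
        ext k
        rw [Finset.mem_inter, Finset.mem_inter]
        constructor <;> intro ⟨hk1, hk2⟩ <;> refine ⟨hk1, ?_⟩
        · exact (hmem' k (Finset.disjoint_left.1 hd hk1)).1 hk2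
        · exact (hmem' k (Finset.disjoint_left.1 hd hk1)).2 hk2
      have e2 : arcSet π ∩ (Finset.Icc 1 (p+q) \ (A ∆ arcSet π0)) =
          arcSet π ∩ (Finset.Icc 1 (p+q) \ A) := by
        ext k
        rw [Finset.mem_inter, Finset.mem_inter, Finset.mem_sdiff, Finset.mem_sdiff]
        constructor <;> intro ⟨hk1, hk2, hk3⟩ <;> refine ⟨hk1, hk2, ?_⟩
        · exact fun h => hk3 ((hmem' k (Finset.disjoint_left.1 hd hk1)).2 h)
        · exact fun h => hk3 ((hmem' k (Finset.disjoint_left.1 hd hk1)).1 h)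
      rw [e1, e2]
      exact hone π hπ
  · -- parity
    rw [heq]
    rcases hxor with ⟨hiA, hi1A⟩ | ⟨hiA, hi1A⟩
    · rw [if_pos hiA]
      have := (insert_erase_facts hiA hi1A).2
      rw [Nat.odd_iff, Nat.odd_iff]
      omega
    · rw [if_neg hiA]
      have := (insert_erase_facts hi1A hiA).2
      rw [Nat.odd_iff, Nat.odd_iff]
      omega


/-- For `Q ⊆ [p+2..p+q]` and `𝒞 = {A ⊆ [p+q] : |A| = p, A ∩ [p+2..p+q] = Q}`, the
partition of `𝒞` into `𝒜 = {A ∈ 𝒞 : Σ(A) odd}` and `𝒜' = {A ∈ 𝒞 : Σ(A) even}`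
forms a balanced pair. -/
theorem stmt10 (p q : ℕ) (hq : 1 ≤ q) (hpq : q ≤ p)
    (Q : Finset ℕ) (hQ : Q ⊆ Finset.Icc (p + 2) (p + q))
    (𝒞 : Finset (Finset ℕ))
    (h𝒞 : 𝒞 = (Finset.Icc 1 (p + q)).powerset.filter
        (fun A => A.card = p ∧ A ∩ Finset.Icc (p + 2) (p + q) = Q)) :
    BalancedPair p q
      (𝒞.filter (fun A => Odd (∑ a ∈ A, a)))
      (𝒞.filter (fun A => ¬ Odd (∑ a ∈ A, a))) := by
  have hmemC : ∀ A : Finset ℕ, A ∈ 𝒞 ↔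
      (A ⊆ Finset.Icc 1 (p+q) ∧ A.card = p ∧ A ∩ Finset.Icc (p+2) (p+q) = Q) := by
    intro A
    rw [h𝒞, Finset.mem_filter, Finset.mem_powerset]
  intro M
  classical
  by_cases hex : ∃ A ∈ 𝒞, IsFeasibleMatching p q A M
  · obtain ⟨A0, hA0, hF0⟩ := hex
    obtain ⟨π0, hπ0M, hs, hip⟩ := exists_short p q hq hF0
    simp only [feasCount]
    apply Finset.card_bij' (fun A _ => A ∆ arcSet π0) (fun A _ => A ∆ arcSet π0)
    · intro A hA
      simp only [Finset.mem_filter] at hA ⊢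
      obtain ⟨⟨hAC, hodd⟩, hFe⟩ := hA
      obtain ⟨hAsub, hAcard, hAQ⟩ := (hmemC A).1 hAC
      obtain ⟨hsub, hcard, hQ', hFe', hpar⟩ := swap_all p q hq hπ0M hs hip hAsub hFe
      exact ⟨⟨(hmemC _).2 ⟨hsub, by rw [hcard, hAcard], by rw [hQ', hAQ]⟩,
        fun h => (hpar.1 h) hodd⟩, hFe'⟩
    · intro A hA
      simp only [Finset.mem_filter] at hA ⊢
      obtain ⟨⟨hAC, hodd⟩, hFe⟩ := hA
      obtain ⟨hAsub, hAcard, hAQ⟩ := (hmemC A).1 hAC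
      obtain ⟨hsub, hcard, hQ', hFe', hpar⟩ := swap_all p q hq hπ0M hs hip hAsub hFe
      exact ⟨⟨(hmemC _).2 ⟨hsub, by rw [hcard, hAcard], by rw [hQ', hAQ]⟩,
        hpar.2 hodd⟩, hFe'⟩
    · intro A hA
      exact symmDiff_symmDiff_cancel_right (arcSet π0) A
    · intro A hA
      exact symmDiff_symmDiff_cancel_right (arcSet π0) A
  · simp only [feasCount]
    have e1 : ((𝒞.filter (fun A => Odd (∑ a ∈ A, a))).filter
        (fun A => IsFeasibleMatching p q A M)) = ∅ :=
      Finset.filter_eq_empty_iff.2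
        (fun A hA hFe => hex ⟨A, (Finset.mem_filter.1 hA).1, hFe⟩)
    have e2 : ((𝒞.filter (fun A => ¬ Odd (∑ a ∈ A, a))).filter
        (fun A => IsFeasibleMatching p q A M)) = ∅ :=
      Finset.filter_eq_empty_iff.2
        (fun A hA hFe => hex ⟨A, (Finset.mem_filter.1 hA).1, hFe⟩)
    rw [e1, e2]
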